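/- There exists a constant c > 0 such that for all sufficiently large n : ℕ, c * 3^n * (n : ℝ)^(-(3:ℝ)/2) ≤ ∑ t in Finset.range (n+1), ((Nat.sqrt n + 1 : ℝ) / (Nat.sqrt n + t + 1)) * (n.choose t) * ((n - t).choose (Nat.sqrt n + t)); i.e. the semisimple dimension of the cell of the Motzkin monoid Mo_n with ⌊√n⌋ through strands is bounded below by a quantity in Θ(n^{-3/2}·3^n). -/

import Mathlib

open Real Filter Finset Nat

lemma sqrtpi_le_stirlingSeq (n : ℕ) : Real.sqrt π ≤ Stirling.stirlingSeq (n+1) := by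
  have ht : Filter.Tendsto (Stirling.stirlingSeq ∘ Nat.succ) atTop (nhds (Real.sqrt π)) :=
    Stirling.tendsto_stirlingSeq_sqrt_pi.comp (tendsto_add_atTop_nat 1)
  exact Stirling.stirlingSeq'_antitone.le_of_tendsto ht n

lemma stirlingSeq_le_e (n : ℕ) : Stirling.stirlingSeq (n+1) ≤ Real.exp 1 / Real.sqrt 2 := by
  simpa [Stirling.stirlingSeq_one] using Stirling.stirlingSeq'_antitone (Nat.zero_le n)

lemma fact_eq_stirling (m : ℕ) (hm : 1 ≤ m) :
    (m ! : ℝ) = Stirling.stirlingSeq m * (Real.sqrt (2*m) * ((m:ℝ)/Real.exp 1)^m) := by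
  have hm0 : (0:ℝ) < m := by exact_mod_cast hm
  have hD : (0:ℝ) < Real.sqrt (2*m) * ((m:ℝ)/Real.exp 1)^m := by positivity
  rw [Stirling.stirlingSeq, div_mul_cancel₀]
  exact ne_of_gt hD

lemma fact_lower (m : ℕ) (hm : 1 ≤ m) :
    Real.sqrt π * (Real.sqrt (2*m) * ((m:ℝ)/Real.exp 1)^m) ≤ (m ! : ℝ) := by
  obtain ⟨j, rfl⟩ := Nat.exists_eq_add_of_le hm
  rw [fact_eq_stirling _ hm]
  have hD : (0:ℝ) ≤ Real.sqrt (2*((1+j:ℕ):ℝ)) * (((1+j:ℕ):ℝ)/Real.exp 1)^(1+j) := by positivity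
  exact mul_le_mul_of_nonneg_right (by simpa [add_comm] using sqrtpi_le_stirlingSeq j) hD

lemma fact_upper (m : ℕ) (hm : 1 ≤ m) :
    (m ! : ℝ) ≤ (Real.exp 1 / Real.sqrt 2) * (Real.sqrt (2*m) * ((m:ℝ)/Real.exp 1)^m) := by
  obtain ⟨j, rfl⟩ := Nat.exists_eq_add_of_le hm
  rw [fact_eq_stirling _ hm]
  have hD : (0:ℝ) ≤ Real.sqrt (2*((1+j:ℕ):ℝ)) * (((1+j:ℕ):ℝ)/Real.exp 1)^(1+j) := by positivity
  exact mul_le_mul_of_nonneg_right (by simpa [add_comm] using stirlingSeq_le_e j) hD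

lemma entropy_bound (a b c n : ℕ) (ha : 0 < a) (hb : 0 < b) (hc : 0 < c)
    (hsum : a + b + c = n)
    (hdev : ((a:ℝ) - n/3)^2 + ((b:ℝ) - n/3)^2 + ((c:ℝ) - n/3)^2 ≤ n) :
    (a:ℝ)^a * (b:ℝ)^b * (c:ℝ)^c ≤ ((n:ℝ)/3)^n * Real.exp 3 := by
  have hn : 0 < n := by omega
  have hnR : (0:ℝ) < n := by exact_mod_cast hn
  have haR : (0:ℝ) < a := by exact_mod_cast ha
  have hbR : (0:ℝ) < b := by exact_mod_cast hb
  have hcR : (0:ℝ) < c := by exact_mod_cast hc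
  have hsumR : (a:ℝ) + b + c = n := by exact_mod_cast hsum
  have single : ∀ x : ℝ, 0 < x →
      (n:ℝ) * (x * Real.log (3*x/n)) ≤ 3*x^2 - x*n := by
    intro x hx
    have hl := Real.log_le_sub_one_of_pos (show (0:ℝ) < 3*x/n by positivity)
    have h1 : (0:ℝ) ≤ x * n := by positivity
    have h2 := mul_le_mul_of_nonneg_left hl h1
    calc (n:ℝ) * (x * Real.log (3*x/n)) = x * n * Real.log (3*x/n) := by ring
      _ ≤ x * n * (3*x/n - 1) := h2
      _ = 3*x^2 - x*n := by field_simp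
  have key2 : (n:ℝ) * ((a:ℝ) * Real.log (3*a/n) + b * Real.log (3*b/n)
      + c * Real.log (3*c/n)) ≤ 3 * n := by
    have sa := single a haR
    have sb := single b hbR
    have sc := single c hcR
    nlinarith [hdev, hsumR]
  have key : (a:ℝ) * Real.log (3*a/n) + b * Real.log (3*b/n)
      + c * Real.log (3*c/n) ≤ 3 :=
    le_of_mul_le_mul_left (by linarith [key2]) hnR
  have hlog : ∀ x : ℝ, 0 < x → Real.log (3*x/n) = Real.log x - Real.log ((n:ℝ)/3) := by
    intro x hx
    rw [show 3*x/(n:ℝ) = x / ((n:ℝ)/3) by field_simp,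
      Real.log_div (ne_of_gt hx) (by positivity)]
  rw [hlog a haR, hlog b hbR, hlog c hcR] at key
  have ea : (a:ℝ)^a = Real.exp ((a:ℝ) * Real.log a) := by
    rw [Real.exp_nat_mul, Real.exp_log haR]
  have eb : (b:ℝ)^b = Real.exp ((b:ℝ) * Real.log b) := by
    rw [Real.exp_nat_mul, Real.exp_log hbR]
  have ec : (c:ℝ)^c = Real.exp ((c:ℝ) * Real.log c) := by
    rw [Real.exp_nat_mul, Real.exp_log hcR]
  have er : ((n:ℝ)/3)^n * Real.exp 3
      = Real.exp ((n:ℝ) * Real.log ((n:ℝ)/3) + 3) := by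
    rw [Real.exp_add, Real.exp_nat_mul, Real.exp_log (by positivity)]
  rw [ea, eb, ec, er, ← Real.exp_add, ← Real.exp_add, Real.exp_le_exp]
  have hmul : ((a:ℝ)+b+c) * Real.log ((n:ℝ)/3) = (n:ℝ) * Real.log ((n:ℝ)/3) := by
    rw [hsumR]
  nlinarith [key, hmul]

set_option maxHeartbeats 1000000 in
/-- The semisimple dimension of the cell of Mo_n with ⌊√n⌋ through strands is
bounded below by a quantity in Θ(n^{-3/2}·3^n). -/
theorem ssdim_lower_bound :
    ∃ c : ℝ, 0 < c ∧
      ∀ᶠ n : ℕ in Filter.atTop,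
        c * 3 ^ n * (n : ℝ) ^ (-(3:ℝ)/2) ≤
          ∑ t ∈ Finset.range (n+1),
            ((Nat.sqrt n + 1 : ℝ) / ((Nat.sqrt n : ℝ) + (t : ℝ) + 1)) *
              (n.choose t : ℝ) * ((n - t).choose (Nat.sqrt n + t) : ℝ) := by
  refine ⟨Real.sqrt π / (4 * (Real.exp 1 / Real.sqrt 2)^3 * Real.exp 3),
    by positivity, ?_⟩
  filter_upwards [Filter.eventually_ge_atTop 49] with n hn
  set k := Nat.sqrt n with hkdef
  set t := (n - k)/3 with htdef
  set r := (n - k) % 3 with hrdef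
  -- natural number facts
  have hk2 : k*k ≤ n := Nat.sqrt_le n
  have hk1 : n < (k+1)*(k+1) := Nat.lt_succ_sqrt n
  have hk7 : 7 ≤ k := by nlinarith [hk1, hn]
  have h7k : 7*k ≤ n := le_trans (Nat.mul_le_mul_right k hk7) hk2
  have h3t : 3*t + r = n - k := Nat.div_add_mod (n - k) 3
  have hr3 : r < 3 := Nat.mod_lt _ (by norm_num)
  have hkn : k ≤ n := Nat.sqrt_le_self n
  have habc : t + (t+k) + (t+r) = n := by omega
  have ht13 : 13 ≤ t := by omega
  have htn : t ≤ n := by omega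
  -- choose/multinomial identity (ℕ)
  have hcc : n.choose t * (n - t).choose (k + t) * (t ! * (t+k)! * (t+r)!) = n ! := by
    have h1 := Nat.choose_mul_factorial_mul_factorial htn
    have h2 := Nat.choose_mul_factorial_mul_factorial (show t + k ≤ n - t by omega)
    have h3 : n - t - (t+k) = t + r := by omega
    rw [h3] at h2
    calc n.choose t * (n - t).choose (k + t) * (t ! * (t+k)! * (t+r)!)
        = (n.choose t * t !) * ((n - t).choose (t+k) * (t+k)! * (t+r)!) := by
          rw [Nat.add_comm k t]; ring
      _ = (n.choose t * t !) * (n - t)! := by rw [h2]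
      _ = n ! := by rw [← h1]
  -- real setup
  have hn49 : (49:ℝ) ≤ (n:ℝ) := by exact_mod_cast hn
  have hn0 : (0:ℝ) < (n:ℝ) := by linarith
  set E : ℝ := Real.exp 1 with hEdef
  have hE : (0:ℝ) < E := Real.exp_pos 1
  set K : ℝ := E / Real.sqrt 2 with hKdef
  have hK : (0:ℝ) < K := by positivity
  set D : ℝ := (t ! : ℝ) * ((t+k)! : ℝ) * ((t+r)! : ℝ) with hDdef
  have hD : (0:ℝ) < D := by positivity
  have H1 : (n.choose t : ℝ) * ((n - t).choose (k + t) : ℝ) = (n ! : ℝ) / D := by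
    rw [eq_div_iff (ne_of_gt hD), hDdef]
    exact_mod_cast hcc
  -- entropy bound
  have hT : 3*(t:ℝ) + (r:ℝ) + (k:ℝ) = (n:ℝ) := by
    have h : 3*t + r + k = n := by omega
    exact_mod_cast h
  have hK2R : (k:ℝ)*(k:ℝ) ≤ (n:ℝ) := by exact_mod_cast hk2
  have hrR : (r:ℝ) ≤ 2 := by exact_mod_cast Nat.lt_succ_iff.mp hr3
  have hr0 : (0:ℝ) ≤ (r:ℝ) := by positivity
  have hk0 : (0:ℝ) ≤ (k:ℝ) := by positivity
  have hdev : ((t:ℝ) - (n:ℝ)/3)^2 + ((((t+k:ℕ)):ℝ) - (n:ℝ)/3)^2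
      + ((((t+r:ℕ)):ℝ) - (n:ℝ)/3)^2 ≤ (n:ℝ) := by
    push_cast
    nlinarith [hT, hK2R, hrR, hr0, hk0, hn49, mul_nonneg hk0 hr0]
  have Hent := entropy_bound t (t+k) (t+r) n (by omega) (by omega) (by omega) habc hdev
  -- Stirling bounds
  have Fn := fact_lower n (by omega)
  have Fa := fact_upper t (by omega)
  have Fb := fact_upper (t+k) (by omega)
  have Fc := fact_upper (t+r) (by omega)
  set Dhigh : ℝ := K^3 * (Real.sqrt (2*(n:ℝ)))^3 * (((n:ℝ)/3)^n * Real.exp 3) / E^n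
    with hDhighdef
  have H2 : D ≤ Dhigh := by
    have step1 : D ≤ (K*(Real.sqrt (2*((t:ℕ):ℝ))*(((t:ℕ):ℝ)/E)^t))
        * (K*(Real.sqrt (2*((t+k:ℕ):ℝ))*(((t+k:ℕ):ℝ)/E)^(t+k)))
        * (K*(Real.sqrt (2*((t+r:ℕ):ℝ))*(((t+r:ℕ):ℝ)/E)^(t+r))) := by
      exact mul_le_mul (mul_le_mul Fa Fb (by positivity) (by positivity)) Fc
        (by positivity) (by positivity)
    have hEpow : E^t * E^(t+k) * E^(t+r) = E^n := by
      rw [← pow_add, ← pow_add, habc]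
    have step2 : (K*(Real.sqrt (2*((t:ℕ):ℝ))*(((t:ℕ):ℝ)/E)^t))
        * (K*(Real.sqrt (2*((t+k:ℕ):ℝ))*(((t+k:ℕ):ℝ)/E)^(t+k)))
        * (K*(Real.sqrt (2*((t+r:ℕ):ℝ))*(((t+r:ℕ):ℝ)/E)^(t+r)))
        = K^3 * (Real.sqrt (2*((t:ℕ):ℝ)) * Real.sqrt (2*((t+k:ℕ):ℝ))
            * Real.sqrt (2*((t+r:ℕ):ℝ)))
          * (((t:ℕ):ℝ)^t * (((t+k:ℕ)):ℝ)^(t+k) * (((t+r:ℕ)):ℝ)^(t+r)) / E^n := by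
      rw [div_pow, div_pow, div_pow, ← hEpow]
      ring
    have hS : Real.sqrt (2*((t:ℕ):ℝ)) * Real.sqrt (2*((t+k:ℕ):ℝ))
        * Real.sqrt (2*((t+r:ℕ):ℝ)) ≤ (Real.sqrt (2*(n:ℝ)))^3 := by
      have m1 : Real.sqrt (2*((t:ℕ):ℝ)) ≤ Real.sqrt (2*(n:ℝ)) := by
        apply Real.sqrt_le_sqrt
        have : (t:ℝ) ≤ (n:ℝ) := by exact_mod_cast htn
        linarith
      have m2 : Real.sqrt (2*((t+k:ℕ):ℝ)) ≤ Real.sqrt (2*(n:ℝ)) := by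
        apply Real.sqrt_le_sqrt
        have : ((t+k:ℕ):ℝ) ≤ (n:ℝ) := by exact_mod_cast (show t + k ≤ n by omega)
        linarith
      have m3 : Real.sqrt (2*((t+r:ℕ):ℝ)) ≤ Real.sqrt (2*(n:ℝ)) := by
        apply Real.sqrt_le_sqrt
        have : ((t+r:ℕ):ℝ) ≤ (n:ℝ) := by exact_mod_cast (show t + r ≤ n by omega)
        linarith
      calc Real.sqrt (2*((t:ℕ):ℝ)) * Real.sqrt (2*((t+k:ℕ):ℝ)) * Real.sqrt (2*((t+r:ℕ):ℝ))
          ≤ Real.sqrt (2*(n:ℝ)) * Real.sqrt (2*(n:ℝ)) * Real.sqrt (2*(n:ℝ)) := by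
            exact mul_le_mul (mul_le_mul m1 m2 (by positivity) (by positivity)) m3
              (by positivity) (by positivity)
        _ = (Real.sqrt (2*(n:ℝ)))^3 := by ring
    have step3 : K^3 * (Real.sqrt (2*((t:ℕ):ℝ)) * Real.sqrt (2*((t+k:ℕ):ℝ))
            * Real.sqrt (2*((t+r:ℕ):ℝ)))
          * (((t:ℕ):ℝ)^t * (((t+k:ℕ)):ℝ)^(t+k) * (((t+r:ℕ)):ℝ)^(t+r)) / E^n
        ≤ Dhigh := by
      rw [hDhighdef]
      gcongr K^3 * ?_ * ?_ / E^n
      all_goals first | exact hS | exact Hent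
    exact step1.trans (step2.trans_le step3)
  set Nlow : ℝ := Real.sqrt π * (Real.sqrt (2*(n:ℝ)) * ((n:ℝ)/E)^n) with hNlowdef
  have hDhigh0 : (0:ℝ) < Dhigh := lt_of_lt_of_le hD H2
  have H4 : Nlow / Dhigh ≤ (n ! : ℝ) / D :=
    div_le_div₀ (by positivity) Fn hD H2
  have H5 : Nlow / Dhigh = Real.sqrt π * 3^n / (K^3 * Real.exp 3 * (2*(n:ℝ))) := by
    have e3 : (Real.sqrt (2*(n:ℝ)))^3 = (2*(n:ℝ)) * Real.sqrt (2*(n:ℝ)) := by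
      rw [pow_succ, Real.sq_sqrt (by positivity)]
    have c1 : ((n:ℝ)/E)^n * E^n = (n:ℝ)^n := by
      rw [div_pow, div_mul_cancel₀]
      exact (pow_pos hE n).ne'
    have c2 : (3:ℝ)^n * ((n:ℝ)/3)^n = (n:ℝ)^n := by
      rw [← mul_pow, show (3:ℝ)*((n:ℝ)/3) = (n:ℝ) by ring]
    rw [hNlowdef, hDhighdef, e3, div_div_eq_mul_div,
      div_eq_div_iff (by positivity) (by positivity)]
    linear_combination (Real.sqrt π * Real.sqrt (2*(n:ℝ)) * K^3 * Real.exp 3 * (2*(n:ℝ))) * c1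
      - (Real.sqrt π * Real.sqrt (2*(n:ℝ)) * K^3 * Real.exp 3 * (2*(n:ℝ))) * c2
  -- prefactor bound
  have H3 : Real.sqrt (n:ℝ) / (2*(n:ℝ)) ≤ ((k:ℝ)+1)/((k:ℝ)+(t:ℝ)+1) := by
    have hsn : Real.sqrt (n:ℝ) ≤ (k:ℝ)+1 := by
      have hle : (n:ℝ) ≤ ((k:ℝ)+1)^2 := by
        have h' : n ≤ (k+1)*(k+1) := le_of_lt hk1
        have h'' := (Nat.cast_le (α := ℝ)).mpr h'
        push_cast at h''
        nlinarith [h'']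
      calc Real.sqrt (n:ℝ) ≤ Real.sqrt (((k:ℝ)+1)^2) := Real.sqrt_le_sqrt hle
        _ = (k:ℝ)+1 := Real.sqrt_sq (by positivity)
    have hden : (k:ℝ)+(t:ℝ)+1 ≤ 2*(n:ℝ) := by
      have h' : k + t + 1 ≤ 2*n := by omega
      exact_mod_cast h'
    exact div_le_div₀ (by positivity) hsn (by positivity) hden
  -- rpow computation
  have Hrpow : (n:ℝ) ^ (-(3:ℝ)/2) = Real.sqrt (n:ℝ) / (n:ℝ)^2 := by
    rw [show (-(3:ℝ)/2) = (1/2 : ℝ) - 2 by norm_num, Real.rpow_sub hn0,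
      ← Real.sqrt_eq_rpow, show ((2:ℝ)) = ((2:ℕ):ℝ) by norm_num, Real.rpow_natCast]
  -- final assembly
  have hsum_ge : ((k:ℝ)+1)/((k:ℝ)+(t:ℝ)+1) * (n.choose t : ℝ)
      * ((n - t).choose (k + t) : ℝ)
      ≤ ∑ i ∈ Finset.range (n+1),
          (((k:ℕ):ℝ) + 1) / (((k:ℕ):ℝ) + (i : ℝ) + 1) *
            (n.choose i : ℝ) * ((n - i).choose (k + i) : ℝ) := by
    have hmem : t ∈ Finset.range (n+1) := Finset.mem_range.mpr (by omega)
    have hnonneg : ∀ i ∈ Finset.range (n+1), (0:ℝ) ≤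
        (((k:ℕ):ℝ) + 1) / (((k:ℕ):ℝ) + (i : ℝ) + 1) *
          (n.choose i : ℝ) * ((n - i).choose (k + i) : ℝ) := by
      intro i _
      positivity
    exact Finset.single_le_sum hnonneg hmem
  clear_value K E D Nlow Dhigh
  have main : Real.sqrt π / (4 * K^3 * Real.exp 3)
      * 3 ^ n * (n:ℝ) ^ (-(3:ℝ)/2)
      ≤ ((k:ℝ)+1)/((k:ℝ)+(t:ℝ)+1) * (n.choose t : ℝ)
        * ((n - t).choose (k + t) : ℝ) := by
    calc Real.sqrt π / (4 * K^3 * Real.exp 3)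
          * 3 ^ n * (n:ℝ) ^ (-(3:ℝ)/2)
        = (Real.sqrt (n:ℝ) / (2*(n:ℝ)))
            * (Real.sqrt π * 3^n / (K^3 * Real.exp 3 * (2*(n:ℝ)))) := by
          rw [Hrpow]
          field_simp [hK.ne', hn0.ne']
          ring
      _ ≤ ((k:ℝ)+1)/((k:ℝ)+(t:ℝ)+1) * ((n ! : ℝ) / D) := by
          refine mul_le_mul H3 ?_ (by positivity) (by positivity)
          rw [← H5]; exact H4
      _ = ((k:ℝ)+1)/((k:ℝ)+(t:ℝ)+1) * (n.choose t : ℝ)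
            * ((n - t).choose (k + t) : ℝ) := by
          rw [← H1]; ring
  exact main.trans hsum_ge
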